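/- Let δ ≠ 0 and λ be real numbers, and let p ≠ q be real numbers. Suppose the real numbers f_p, g_p, f_q, g_q satisfy the self-consistency equations p f_p = 1 − (1 + λ) f_p − f_p g_p, δ g_p = − f_p (1 + g_p), and the same two equations with p replaced by q (and f_p, g_p replaced by f_q, g_q). Then (f_p − f_q)(1 − δ g_p g_q) = (q − p) f_p f_q. -/
import Mathlib


/-- The algebraic identity underlying the frequency-domain relation
`1 − δ R̄_ℓ(p) R̄_ℓ(q) = (q − p) R̄_θ(p) R̄_θ(q) / (R̄_θ(p) − R̄_θ(q))`
for the Laplace transforms `f_p = R̄_θ(p)`, `g_p = R̄_ℓ(p)` of the DMFT response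
functions of high-dimensional ridge regression. -/
theorem dmft_ridge_response_identity (δ lam p q fp gp fq gq : ℝ)
    (hδ : δ ≠ 0) (hpq : p ≠ q)
    (h1p : p * fp = 1 - (1 + lam) * fp - fp * gp)
    (h2p : δ * gp = -fp * (1 + gp))
    (h1q : q * fq = 1 - (1 + lam) * fq - fq * gq)
    (h2q : δ * gq = -fq * (1 + gq)) :
    (fp - fq) * (1 - δ * gp * gq) = (q - p) * fp * fq := by
  linear_combination fq * h1p - fp * h1q + fq * gq * h2p - fp * gp * h2q
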